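/- If (M, 𝒮; e_1, …, e_h) is an (a, q, h, d)-pyramid and i, j are integers with 0 ≤ i ≤ j ≤ h, then (M / {e_{i+1}, …, e_j}, 𝒮; e_1, …, e_i, e_{j+1}, …, e_h) is an (a, q, h - (j - i), d)-pyramid. -/

import Mathlib

open Set
open scoped Classical

namespace Matroid

variable {α β : Type*}

/-- The rank of a set `X` in a matroid `M`: the maximum size of an independent subset of `X`
(appropriate for finite matroids). -/
noncomputable def rk (M : Matroid α) (X : Set α) : ℕ :=
  sSup {n | ∃ I, I ⊆ X ∧ M.Indep I ∧ I.ncard = n}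

/-- The rank `r(M)` of a matroid `M`. -/
noncomputable def rank (M : Matroid α) : ℕ := M.rk M.E

/-- The deletion `M \ D` of a set `D` from `M`. -/
def delete' (M : Matroid α) (D : Set α) : Matroid α := M ↾ (M.E \ D)

/-- The contraction `M / C` of a set `C` in `M`, defined via duality. -/
def contract' (M : Matroid α) (C : Set α) : Matroid α := (M✶.delete' C)✶

/-- `N` is a minor of `M`, i.e. `N = M / C \ D` for some sets `C` and `D`. -/
def IsMinor' (N M : Matroid α) : Prop := ∃ C D : Set α, (M.contract' C).delete' D = N

/-- An isomorphism between matroids, possibly on different ground types. -/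
def IsIso (M : Matroid α) (N : Matroid β) : Prop :=
  ∃ e : M.E ≃ N.E, ∀ I : Set M.E, M.Indep ((↑) '' I) ↔ N.Indep ((↑) '' (e '' I))

/-- `N` is isomorphic to the uniform matroid `U_{k,n}`: the ground set has `n` elements and
the independent sets are exactly the subsets with at most `k` elements. -/
def IsUnif (N : Matroid α) (k n : ℕ) : Prop :=
  N.E.Finite ∧ N.E.ncard = n ∧ ∀ I ⊆ N.E, (N.Indep I ↔ I.ncard ≤ k)

/-- `M` has a minor isomorphic to `U_{k,n}`. -/
def HasUnifMinor (M : Matroid α) (k n : ℕ) : Prop :=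
  ∃ N : Matroid α, N.IsMinor' M ∧ N.IsUnif k n

/-- `τ_a(M)`: the minimum size of a collection of subsets of `E(M)`, each of rank at most `a`,
whose union is `E(M)`. -/
noncomputable def tau (M : Matroid α) (a : ℕ) : ℕ :=
  sInf {n | ∃ 𝒞 : Finset (Set α),
    𝒞.card = n ∧ (∀ X ∈ 𝒞, X ⊆ M.E ∧ M.rk X ≤ a) ∧ M.E ⊆ ⋃₀ ↑𝒞}

/-- `M` is `d`-thick: every collection of sets, each of rank less than `r(M)`, whose union
is `E(M)`, has at least `d` members. -/
def Thick (M : Matroid α) (d : ℕ) : Prop :=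
  ∀ 𝒞 : Finset (Set α), (∀ X ∈ 𝒞, X ⊆ M.E ∧ M.rk X < M.rank) → M.E ⊆ ⋃₀ ↑𝒞 → d ≤ 𝒞.card

/-- A set `X` is `d`-thick in `M` if the restriction `M|X` is `d`-thick. -/
def ThickIn (M : Matroid α) (d : ℕ) (X : Set α) : Prop := (M ↾ X).Thick d

/-- A collection of sets is simple in `M` if its members are pairwise dissimilar,
i.e. distinct members have distinct closures. -/
def SimpleColl (M : Matroid α) (𝒳 : Finset (Set α)) : Prop :=
  ∀ X ∈ 𝒳, ∀ Y ∈ 𝒳, M.closure X = M.closure Y → X = Y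

/-- `ε_M(𝒳)`: the maximum size of a subcollection of `𝒳` that is simple in `M`. -/
noncomputable def eps (M : Matroid α) (𝒳 : Finset (Set α)) : ℕ :=
  sSup {n | ∃ 𝒴 : Finset (Set α), 𝒴 ⊆ 𝒳 ∧ M.SimpleColl 𝒴 ∧ 𝒴.card = n}

/-- `𝒳` is `d`-firm in `M`: every subcollection `𝒳'` with `|𝒳'| > |𝒳|/d` has the same rank
as `𝒳`. -/
def Firm (M : Matroid α) (d : ℕ) (𝒳 : Finset (Set α)) : Prop :=
  ∀ 𝒳' ⊆ 𝒳, 𝒳.card < d * 𝒳'.card → M.rk (⋃₀ ↑𝒳') = M.rk (⋃₀ ↑𝒳)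

/-- `ℱ` is a cover of the collection `𝒳` in `M`: every member of `𝒳` is contained in a member
of `ℱ`. -/
def CoverOf (M : Matroid α) (ℱ 𝒳 : Finset (Set α)) : Prop :=
  (∀ F ∈ ℱ, F ⊆ M.E) ∧ ∀ X ∈ 𝒳, ∃ F ∈ ℱ, X ⊆ F

/-- `ℱ` is a cover of the matroid `M`: every element of `E(M)` lies in a member of `ℱ`. -/
def CoverOfGround (M : Matroid α) (ℱ : Finset (Set α)) : Prop :=
  (∀ F ∈ ℱ, F ⊆ M.E) ∧ M.E ⊆ ⋃₀ ↑ℱ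

/-- The weight `wt^d_M(ℱ) = Σ_{F ∈ ℱ} d^{r_M(F)}`. -/
noncomputable def wt (M : Matroid α) (d : ℕ) (ℱ : Finset (Set α)) : ℕ :=
  ∑ F ∈ ℱ, d ^ M.rk F

/-- `ℱ` is a `d`-minimal cover of the collection `𝒳` in `M`. -/
def MinimalCoverOf (M : Matroid α) (d : ℕ) (ℱ 𝒳 : Finset (Set α)) : Prop :=
  M.CoverOf ℱ 𝒳 ∧ ∀ ℱ' : Finset (Set α), M.CoverOf ℱ' 𝒳 → M.wt d ℱ ≤ M.wt d ℱ'

/-- `ℱ` is a `d`-minimal cover of the matroid `M`. -/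
def MinimalCoverOfGround (M : Matroid α) (d : ℕ) (ℱ : Finset (Set α)) : Prop :=
  M.CoverOfGround ℱ ∧ ∀ ℱ' : Finset (Set α), M.CoverOfGround ℱ' → M.wt d ℱ ≤ M.wt d ℱ'

/-- `τ^d(M)`: the minimum weight of a cover of `M`. -/
noncomputable def tauW (M : Matroid α) (d : ℕ) : ℕ :=
  sInf {n | ∃ ℱ : Finset (Set α), M.CoverOfGround ℱ ∧ M.wt d ℱ = n}

/-- `𝒳` is `d`-scattered in `M`: every member of `𝒳` is `d`-thick in `M`, and
`{cl_M(X) : X ∈ 𝒳}` is a `d`-minimal cover of `𝒳` in `M`. -/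
def Scattered (M : Matroid α) (d : ℕ) (𝒳 : Finset (Set α)) : Prop :=
  (∀ X ∈ 𝒳, M.ThickIn d X) ∧ M.MinimalCoverOf d (𝒳.image M.closure) 𝒳

/-- `(M, 𝒮; L)` is an `(a, q, h, d)`-pyramid, where `h = L.length` and `L` lists the
elements `e_1, …, e_h`. -/
def IsPyramid (M : Matroid α) (𝒮 : Finset (Set α)) (L : List α) (a q d : ℕ) : Prop :=
  L.Nodup ∧ M.Indep {x | x ∈ L} ∧
  𝒮.Nonempty ∧
  (∀ S ∈ 𝒮, S ⊆ M.E ∧ M.rk S = a) ∧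
  (∀ S ∈ 𝒮, M.rk (S ∪ {x | x ∈ L}) = M.rk S + M.rk {x | x ∈ L}) ∧
  (∀ i < L.length, ∀ S ∈ 𝒮, ∃ f : Fin q → Set α,
    (∀ j, f j ∈ 𝒮) ∧
    (∀ j k, j ≠ k →
      (M.contract' {x | x ∈ L.take i}).closure (f j) ≠
        (M.contract' {x | x ∈ L.take i}).closure (f k)) ∧
    (∀ j, (M.contract' {x | x ∈ L.take (i+1)}).closure (f j) =
      (M.contract' {x | x ∈ L.take (i+1)}).closure S)) ∧
  (∀ S ∈ 𝒮, M.ThickIn d S)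

/-- `M` is representable over the field `F`. -/
def RepresentableOver (M : Matroid α) (F : Type*) [Field F] : Prop :=
  ∃ (n : ℕ) (φ : α → (Fin n → F)),
    ∀ I ⊆ M.E, (M.Indep I ↔ LinearIndependent F (fun x : I => φ x))

end Matroid

namespace Matroid

section Aux

variable {α : Type*} {M : Matroid α} {I J X Y U C D S T B : Set α} {e : α} {a c n : ℕ}

lemma IsBasis'.rk_eq (hM : M.Finite) (hI : M.IsBasis' I X) : M.rk X = I.ncard := by
  haveI := hM
  refine IsGreatest.csSup_eq ⟨⟨I, hI.subset, hI.indep, rfl⟩, ?_⟩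
  rintro n ⟨J, hJX, hJ, rfl⟩
  obtain ⟨I', hI', hJI'⟩ := hJ.subset_isBasis'_of_subset hJX
  have hcard : I'.ncard = I.ncard := by
    have := hI'.encard_eq_encard hI
    simp [Set.ncard_def, this]
  rw [← hcard]
  exact Set.ncard_le_ncard hJI' (M.set_finite I' hI'.indep.subset_ground)

lemma rk_le_of_indep_subset (hM : M.Finite) (hJ : M.Indep J) (hJX : J ⊆ X) :
    J.ncard ≤ M.rk X := by
  obtain ⟨I, hI⟩ := M.exists_isBasis' X
  rw [hI.rk_eq hM]
  obtain ⟨I', hI', hJI'⟩ := hJ.subset_isBasis'_of_subset hJX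
  have hcard : I'.ncard = I.ncard := by
    have := hI'.encard_eq_encard hI
    simp [Set.ncard_def, this]
  rw [← hcard]
  exact Set.ncard_le_ncard hJI' (M.set_finite I' hI'.indep.subset_ground)

lemma Indep.rk_self (hM : M.Finite) (hI : M.Indep I) : M.rk I = I.ncard :=
  hI.isBasis_self.isBasis'.rk_eq hM

lemma rk_mono (hM : M.Finite) (h : X ⊆ Y) : M.rk X ≤ M.rk Y := by
  obtain ⟨I, hI⟩ := M.exists_isBasis' X
  rw [hI.rk_eq hM]
  exact rk_le_of_indep_subset hM hI.indep (hI.subset.trans h)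

lemma rk_closure_eq' (hM : M.Finite) (X : Set α) : M.rk (M.closure X) = M.rk X := by
  obtain ⟨I, hI⟩ := M.exists_isBasis' X
  rw [hI.isBasis_closure_right.isBasis'.rk_eq hM, hI.rk_eq hM]

lemma rk_le_ncard (hM : M.Finite) (hX : X ⊆ M.E) : M.rk X ≤ X.ncard := by
  obtain ⟨I, hI⟩ := M.exists_isBasis' X
  rw [hI.rk_eq hM]
  exact Set.ncard_le_ncard hI.subset (M.set_finite X hX)

lemma rk_submod (hM : M.Finite) (hX : X ⊆ M.E) (hY : Y ⊆ M.E) :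
    M.rk (X ∪ Y) + M.rk (X ∩ Y) ≤ M.rk X + M.rk Y := by
  haveI := hM
  obtain ⟨I, hI⟩ := M.exists_isBasis (X ∩ Y) ((Set.inter_subset_left).trans hX)
  obtain ⟨J, hJ, hIJ⟩ := hI.indep.subset_isBasis_of_subset
    (hI.subset.trans ((Set.inter_subset_left).trans Set.subset_union_left))
    (Set.union_subset hX hY)
  have hJfin : J.Finite := M.set_finite J hJ.indep.subset_ground
  rw [hJ.isBasis'.rk_eq hM, hI.isBasis'.rk_eq hM]
  have h1 : (J ∩ X).ncard ≤ M.rk X :=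
    rk_le_of_indep_subset hM (hJ.indep.subset Set.inter_subset_left) Set.inter_subset_right
  have h2 : (J ∩ Y).ncard ≤ M.rk Y :=
    rk_le_of_indep_subset hM (hJ.indep.subset Set.inter_subset_left) Set.inter_subset_right
  have hUnion : (J ∩ X) ∪ (J ∩ Y) = J := by
    rw [← Set.inter_union_distrib_left]
    exact Set.inter_eq_self_of_subset_left hJ.subset
  have hInter : (J ∩ X) ∩ (J ∩ Y) = J ∩ (X ∩ Y) := by
    ext x; simp only [Set.mem_inter_iff]; tauto
  have hcard := Set.ncard_union_add_ncard_inter (J ∩ X) (J ∩ Y)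
    (hJfin.subset Set.inter_subset_left) (hJfin.subset Set.inter_subset_left)
  rw [hUnion, hInter] at hcard
  have hI2 : I.ncard ≤ (J ∩ (X ∩ Y)).ncard :=
    Set.ncard_le_ncard (Set.subset_inter hIJ hI.subset) (hJfin.subset Set.inter_subset_left)
  omega

lemma rk_union_le (hM : M.Finite) (hX : X ⊆ M.E) (hY : Y ⊆ M.E) :
    M.rk (X ∪ Y) ≤ M.rk X + M.rk Y :=
  le_trans (Nat.le_add_right _ _) (rk_submod hM hX hY)

lemma indep_of_ncard_le_rk (hM : M.Finite) (hX : X ⊆ M.E) (h : X.ncard ≤ M.rk X) :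
    M.Indep X := by
  haveI := hM
  obtain ⟨I, hI⟩ := M.exists_isBasis X hX
  rw [hI.isBasis'.rk_eq hM] at h
  have heq := Set.eq_of_subset_of_ncard_le hI.subset h (M.set_finite X hX)
  rw [← heq]
  exact hI.indep

lemma rk_union_eq_of_subset_closure (hM : M.Finite) (hX : X ⊆ M.E) (hY : Y ⊆ M.closure X) :
    M.rk (X ∪ Y) = M.rk X := by
  refine le_antisymm ?_ (rk_mono hM Set.subset_union_left)
  have h1 : X ∪ Y ⊆ M.closure X := Set.union_subset (M.subset_closure X hX) hY
  have := rk_mono hM h1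
  rwa [rk_closure_eq' hM] at this

lemma closure_eq_closure_of_rk_le (hM : M.Finite) (hXU : X ⊆ U) (hU : U ⊆ M.E)
    (h : M.rk U ≤ M.rk X) : M.closure X = M.closure U := by
  haveI := hM
  obtain ⟨I, hI⟩ := M.exists_isBasis X (hXU.trans hU)
  obtain ⟨J, hJ, hIJ⟩ := hI.indep.subset_isBasis_of_subset (hI.subset.trans hXU) hU
  have hle : J.ncard ≤ I.ncard := by
    have e1 := hI.isBasis'.rk_eq hM
    have e2 := hJ.isBasis'.rk_eq hM
    omega
  have heq : I = J := Set.eq_of_subset_of_ncard_le hIJ hle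
    (M.set_finite J hJ.indep.subset_ground)
  rw [← hI.closure_eq_closure, heq, hJ.closure_eq_closure]

lemma mem_closure_of_rk_insert_le (hM : M.Finite) (hX : X ⊆ M.E) (he : e ∈ M.E)
    (h : M.rk (insert e X) ≤ M.rk X) : e ∈ M.closure X := by
  have hcl := closure_eq_closure_of_rk_le hM (Set.subset_insert e X)
    (Set.insert_subset he hX) h
  rw [hcl]
  exact M.mem_closure_of_mem' (Set.mem_insert e X) he

@[simp] lemma delete_ground' (M : Matroid α) (D : Set α) : (M.delete' D).E = M.E \ D := rfl

@[simp] lemma contract_ground' (M : Matroid α) (C : Set α) : (M.contract' C).E = M.E \ C := rfl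

lemma delete_delete' (M : Matroid α) (D₁ D₂ : Set α) :
    (M.delete' D₁).delete' D₂ = M.delete' (D₁ ∪ D₂) := by
  show (M ↾ (M.E \ D₁)) ↾ ((M ↾ (M.E \ D₁)).E \ D₂) = M ↾ (M.E \ (D₁ ∪ D₂))
  rw [restrict_ground_eq, M.restrict_restrict_eq Set.diff_subset, Set.diff_diff]

lemma contract_contract' (M : Matroid α) (C₁ C₂ : Set α) :
    (M.contract' C₁).contract' C₂ = M.contract' (C₁ ∪ C₂) := by
  show ((M✶.delete' C₁)✶✶.delete' C₂)✶ = _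
  rw [dual_dual, delete_delete']
  rfl

lemma contract'_finite (hM : M.Finite) (C : Set α) : (M.contract' C).Finite :=
  ⟨by rw [contract_ground']; exact hM.ground_finite.subset Set.diff_subset⟩

lemma contract_base_iff (hC : M.Indep C) :
    (M.contract' C).IsBase B ↔ M.IsBase (B ∪ C) ∧ Disjoint B C := by
  have hCE : C ⊆ M.E := hC.subset_ground
  have hrw : (M.contract' C).IsBase B ↔ M✶.IsBasis' ((M.E \ C) \ B) (M.E \ C) ∧ B ⊆ M.E \ C := by
    show ((M✶.delete' C)✶).IsBase B ↔ _
    rw [dual_isBase_iff']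
    show (M✶ ↾ (M✶.E \ C)).IsBase _ ∧ B ⊆ (M✶ ↾ (M✶.E \ C)).E ↔ _
    rw [isBase_restrict_iff', restrict_ground_eq, dual_ground]
    rfl
  rw [hrw]
  constructor
  · rintro ⟨h1, hBE⟩
    rw [isBasis'_iff_isBasis (show M.E \ C ⊆ M✶.E from Set.diff_subset)] at h1
    obtain ⟨Bs, hBs, hDBs⟩ := h1.indep.exists_isBase_superset
    have hint : Bs ∩ (M.E \ C) = (M.E \ C) \ B :=
      (h1.eq_of_subset_indep (hBs.indep.subset Set.inter_subset_left)
        (Set.subset_inter hDBs h1.subset) Set.inter_subset_right).symm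
    have hMB : M.IsBase (M.E \ Bs) := hBs.compl_isBase_of_dual
    have h2 : M✶.IsBasis ((M.E \ (M.E \ Bs)) ∩ (M.E \ C)) (M.E \ C) := by
      rw [Set.diff_diff_cancel_left (show Bs ⊆ M.E from hBs.subset_ground), hint]
      exact h1
    have h3 : M.IsBasis ((M.E \ Bs) ∩ C) C :=
      (hMB.inter_isBasis_iff_compl_inter_isBasis_dual hCE).mpr h2
    have h4 : (M.E \ Bs) ∩ C = C :=
      h3.eq_of_subset_indep hC Set.inter_subset_right (subset_refl C)
    have hCsub : C ⊆ M.E \ Bs := by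
      intro x hx; exact (h4.symm ▸ hx : x ∈ (M.E \ Bs) ∩ C).1
    have hBeq : B = (M.E \ Bs) \ C := by
      have hB1 : B = (M.E \ C) \ ((M.E \ C) \ B) := (Set.diff_diff_cancel_left hBE).symm
      rw [hB1, ← hint]
      ext x
      simp only [Set.mem_diff, Set.mem_inter_iff]
      tauto
    constructor
    · rw [hBeq, Set.diff_union_of_subset hCsub]
      exact hMB
    · exact (Set.subset_diff.mp hBE).2
  · rintro ⟨hB, hdisj⟩
    have hBE : B ⊆ M.E \ C :=
      Set.subset_diff.mpr ⟨(Set.subset_union_left).trans hB.subset_ground, hdisj⟩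
    refine ⟨?_, hBE⟩
    rw [isBasis'_iff_isBasis (show M.E \ C ⊆ M✶.E from Set.diff_subset)]
    have hbasis : M.IsBasis ((B ∪ C) ∩ C) C := by
      rw [Set.inter_eq_self_of_subset_right Set.subset_union_right]
      exact hC.isBasis_self
    have h2 := hB.compl_inter_isBasis_of_inter_isBasis hbasis
    have heq : (M.E \ (B ∪ C)) ∩ (M.E \ C) = (M.E \ C) \ B := by
      ext x
      simp only [Set.mem_diff, Set.mem_inter_iff, Set.mem_union]
      tauto
    rwa [heq] at h2

lemma contract_indep_iff' (hC : M.Indep C) :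
    (M.contract' C).Indep I ↔ M.Indep (I ∪ C) ∧ Disjoint I C := by
  constructor
  · intro h
    obtain ⟨B, hB, hIB⟩ := h.exists_isBase_superset
    rw [contract_base_iff hC] at hB
    exact ⟨hB.1.indep.subset (Set.union_subset_union_left C hIB),
      Set.disjoint_of_subset_left hIB hB.2⟩
  · rintro ⟨hi, hdisj⟩
    obtain ⟨B, hB, hIB⟩ := hi.exists_isBase_superset
    have hCB : C ⊆ B := (Set.subset_union_right).trans hIB
    have hB' : (M.contract' C).IsBase (B \ C) := by
      rw [contract_base_iff hC, Set.diff_union_of_subset hCB]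
      exact ⟨hB, Set.disjoint_sdiff_left⟩
    exact hB'.indep.subset
      (Set.subset_diff.mpr ⟨(Set.subset_union_left).trans hIB, hdisj⟩)

lemma contract_basis_union (hC : M.Indep C) (hX : X ⊆ M.E \ C)
    (hI : (M.contract' C).IsBasis I X) : M.IsBasis (I ∪ C) (X ∪ C) := by
  have hIX : I ⊆ X := hI.subset
  have hIE : I ⊆ M.E \ C := hIX.trans hX
  have hIdisj : Disjoint I C := (Set.subset_diff.mp hIE).2
  have hIi : M.Indep (I ∪ C) := ((contract_indep_iff' hC).mp hI.indep).1
  rw [isBasis_iff (Set.union_subset (hX.trans Set.diff_subset) hC.subset_ground)]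
  refine ⟨hIi, Set.union_subset_union_left _ hIX, fun J hJ hIJ hJX => ?_⟩
  have hCJ : C ⊆ J := (Set.subset_union_right).trans hIJ
  have hJC : (M.contract' C).Indep (J \ C) := by
    rw [contract_indep_iff' hC, Set.diff_union_of_subset hCJ]
    exact ⟨hJ, Set.disjoint_sdiff_left⟩
  have hIJC : I ⊆ J \ C :=
    Set.subset_diff.mpr ⟨(Set.subset_union_left).trans hIJ, hIdisj⟩
  have hJCX : J \ C ⊆ X := by
    rw [Set.diff_subset_iff, Set.union_comm]
    exact hJX
  have heq : I = J \ C := hI.eq_of_subset_indep hJC hIJC hJCX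
  rw [heq, Set.diff_union_of_subset hCJ]

lemma contract_rk_add (hM : M.Finite) (hC : M.Indep C) (hX : X ⊆ M.E \ C) :
    M.rk (X ∪ C) = (M.contract' C).rk X + C.ncard := by
  haveI := hM
  have hMc : (M.contract' C).Finite := contract'_finite hM C
  obtain ⟨I, hI⟩ := (M.contract' C).exists_isBasis X (by rw [contract_ground']; exact hX)
  have hB := contract_basis_union hC hX hI
  rw [hB.isBasis'.rk_eq hM, hI.isBasis'.rk_eq hMc]
  have hIdisj : Disjoint I C := (Set.subset_diff.mp (hI.subset.trans hX)).2
  rw [Set.ncard_union_eq hIdisj (M.set_finite I (hI.subset.trans (hX.trans Set.diff_subset)))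
    (M.set_finite C hC.subset_ground)]

lemma contract_closure_eq' (hC : M.Indep C) (hX : X ⊆ M.E \ C) :
    (M.contract' C).closure X = M.closure (X ∪ C) \ C := by
  obtain ⟨I, hI⟩ := (M.contract' C).exists_isBasis X (by rw [contract_ground']; exact hX)
  have hB := contract_basis_union hC hX hI
  rw [← hI.closure_eq_closure, ← hB.closure_eq_closure]
  have hIdisj : Disjoint I C := (Set.subset_diff.mp (hI.subset.trans hX)).2
  ext e
  by_cases heC : e ∈ C
  · simp only [Set.mem_diff, heC, not_true_eq_false, and_false, iff_false]
    intro h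
    exact ((((M.contract' C).closure_subset_ground I) h) : e ∈ M.E \ C).2 heC
  · rw [hI.indep.mem_closure_iff']
    have hd : Disjoint (insert e I) C := by
      rw [Set.insert_eq]
      exact Set.disjoint_union_left.mpr ⟨Set.disjoint_singleton_left.mpr heC, hIdisj⟩
    simp only [Set.mem_diff, hB.indep.mem_closure_iff', contract_ground',
      contract_indep_iff' hC, Set.insert_union, hd, and_true, heC,
      not_false_eq_true, Set.mem_union]
    tauto

lemma closure_congr_contract (hC : M.Indep C) (hX : X ⊆ M.E \ C) (hY : Y ⊆ M.E \ C)
    (h : M.closure X = M.closure Y) :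
    (M.contract' C).closure X = (M.contract' C).closure Y := by
  rw [contract_closure_eq' hC hX, contract_closure_eq' hC hY,
    ← closure_union_closure_left_eq, h, closure_union_closure_left_eq]

lemma rk_union_eq_of_skew (hM : M.Finite) (hS : S ⊆ M.E) (hC : C ⊆ M.E)
    (hsk : M.rk (S ∪ C) = M.rk S + M.rk C) (hX : X ⊆ S) :
    M.rk (X ∪ C) = M.rk X + M.rk C := by
  have hXE : X ⊆ M.E := hX.trans hS
  have hXCS : (X ∪ C) ∪ S = S ∪ C := by
    ext x; simp only [Set.mem_union]
    constructor
    · rintro ((h | h) | h) <;> tauto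
    · rintro (h | h) <;> tauto
  have h1 := rk_submod hM (Set.union_subset hXE hC) hS
  rw [hXCS] at h1
  have h2 : M.rk X ≤ M.rk ((X ∪ C) ∩ S) :=
    rk_mono hM (Set.subset_inter Set.subset_union_left hX)
  have h3 : M.rk (X ∪ C) ≤ M.rk X + M.rk C := rk_union_le hM hXE hC
  omega

lemma rk_union_eq_of_skew_right (hM : M.Finite) (hS : S ⊆ M.E) (hC : C ⊆ M.E)
    (hsk : M.rk (S ∪ C) = M.rk S + M.rk C) (hY : Y ⊆ C) :
    M.rk (S ∪ Y) = M.rk S + M.rk Y := by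
  have := rk_union_eq_of_skew hM hC hS (by rw [Set.union_comm]; omega) hY
  rw [Set.union_comm] at this
  omega

lemma contract_restrict_eq (hM : M.Finite) (hC : M.Indep C) (hS : S ⊆ M.E \ C)
    (hsk : M.rk (S ∪ C) = M.rk S + M.rk C) :
    (M.contract' C) ↾ S = M ↾ S := by
  refine ext_indep rfl fun I hIS => ?_
  rw [restrict_ground_eq] at hIS
  rw [restrict_indep_iff, restrict_indep_iff, contract_indep_iff' hC]
  constructor
  · rintro ⟨⟨hi, _⟩, h2⟩
    exact ⟨hi.subset Set.subset_union_left, h2⟩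
  · rintro ⟨hi, h2⟩
    have hIdisj : Disjoint I C := (Set.subset_diff.mp (hIS.trans hS)).2
    refine ⟨⟨?_, hIdisj⟩, h2⟩
    have h3 : M.rk (I ∪ C) = M.rk I + M.rk C :=
      rk_union_eq_of_skew hM (hS.trans Set.diff_subset) hC.subset_ground hsk hIS
    apply indep_of_ncard_le_rk hM (Set.union_subset hi.subset_ground hC.subset_ground)
    rw [h3, hi.rk_self hM, hC.rk_self hM,
      Set.ncard_union_eq hIdisj (M.set_finite I hi.subset_ground)
        (M.set_finite C hC.subset_ground)]

/-- Rank of `S ∪ Y` in `M ／ A`, where `S` is skew to an independent set containing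
`A` and `Y`. -/
lemma contract_rk_skew (hM : M.Finite) {Lset A Y : Set α} (hL : M.Indep Lset)
    (hSE : S ⊆ M.E) (hSL : Disjoint S Lset)
    (hsk : M.rk (S ∪ Lset) = M.rk S + M.rk Lset)
    (hA : A ⊆ Lset) (hY : Y ⊆ Lset) (hYA : Disjoint Y A) :
    (M.contract' A).rk (S ∪ Y) = M.rk S + Y.ncard := by
  have hA' : M.Indep A := hL.subset hA
  have hLE : Lset ⊆ M.E := hL.subset_ground
  have hSYE : S ∪ Y ⊆ M.E \ A := by
    rw [Set.subset_diff]
    exact ⟨Set.union_subset hSE (hY.trans hLE),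
      Set.disjoint_union_left.mpr ⟨Set.disjoint_of_subset_right hA hSL, hYA⟩⟩
  have h1 := contract_rk_add hM hA' hSYE
  have h2 : (S ∪ Y) ∪ A = S ∪ (Y ∪ A) := Set.union_assoc S Y A
  have h3 : M.rk (S ∪ (Y ∪ A)) = M.rk S + M.rk (Y ∪ A) :=
    rk_union_eq_of_skew_right hM hSE hLE hsk (Set.union_subset hY hA)
  have h4 : M.rk (Y ∪ A) = Y.ncard + A.ncard := by
    rw [(hL.subset (Set.union_subset hY hA)).rk_self hM,
      Set.ncard_union_eq hYA (M.set_finite Y (hY.trans hLE)) (M.set_finite A (hA.trans hLE))]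
  rw [h2, h3, h4] at h1
  omega

lemma dissim_transfer {P : Matroid α} (hP : P.Finite) {T₁ T₂ C : Set α} {e : α} {a c : ℕ}
    (hT₁ : T₁ ⊆ P.E) (hT₂ : T₂ ⊆ P.E) (hCE : C ⊆ P.E) (heE : e ∈ P.E)
    (hr₁ : P.rk T₁ = a) (hr₂ : P.rk T₂ = a)
    (hre : P.rk (T₁ ∪ {e}) = a + 1)
    (hrC₁ : P.rk (T₁ ∪ C) = a + c)
    (hrCe : P.rk (T₁ ∪ C ∪ {e}) = a + c + 1)
    (hsim : P.closure (T₁ ∪ {e}) = P.closure (T₂ ∪ {e}))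
    (hCeq : P.closure (T₁ ∪ C) = P.closure (T₂ ∪ C)) :
    P.closure T₁ = P.closure T₂ := by
  have hT₂C : T₂ ⊆ P.closure (T₁ ∪ C) := by
    rw [hCeq]
    exact Set.subset_union_left.trans (P.subset_closure (T₂ ∪ C) (Set.union_subset hT₂ hCE))
  have h2 : P.rk (T₁ ∪ C ∪ T₂) = a + c := by
    rw [rk_union_eq_of_subset_closure hP (Set.union_subset hT₁ hCE) hT₂C, hrC₁]
  have hT₂e : T₂ ⊆ P.closure (T₁ ∪ {e}) := by
    rw [hsim]
    exact Set.subset_union_left.trans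
      (P.subset_closure (T₂ ∪ {e}) (Set.union_subset hT₂ (Set.singleton_subset_iff.mpr heE)))
  have h3 : P.rk (T₁ ∪ {e} ∪ T₂) = a + 1 := by
    rw [rk_union_eq_of_subset_closure hP
      (Set.union_subset hT₁ (Set.singleton_subset_iff.mpr heE)) hT₂e, hre]
  have key : P.rk (T₁ ∪ T₂) = a := by
    by_contra hne
    have hge : P.rk T₁ ≤ P.rk (T₁ ∪ T₂) := rk_mono hP Set.subset_union_left
    have hle : P.rk (T₁ ∪ T₂) ≤ P.rk (T₁ ∪ {e} ∪ T₂) := by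
      refine rk_mono hP ?_
      intro x hx
      rcases hx with h | h
      · exact Or.inl (Or.inl h)
      · exact Or.inr h
    have hTT : P.rk (T₁ ∪ T₂) = a + 1 := by omega
    have hsets : insert e (T₁ ∪ T₂) = T₁ ∪ {e} ∪ T₂ := by
      ext x
      simp only [Set.mem_insert_iff, Set.mem_union, Set.mem_singleton_iff]
      tauto
    have heCl : e ∈ P.closure (T₁ ∪ T₂) := by
      refine mem_closure_of_rk_insert_le hP (Set.union_subset hT₁ hT₂) heE ?_
      rw [hsets, h3, hTT]
    have heCl2 : e ∈ P.closure (T₁ ∪ C ∪ T₂) := by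
      refine P.closure_subset_closure ?_ heCl
      intro x hx
      rcases hx with h | h
      · exact Or.inl (Or.inl h)
      · exact Or.inr h
    have h5 : P.rk (T₁ ∪ C ∪ T₂ ∪ {e}) = a + c := by
      rw [rk_union_eq_of_subset_closure hP
        (Set.union_subset (Set.union_subset hT₁ hCE) hT₂)
        (Set.singleton_subset_iff.mpr heCl2), h2]
    have h6 : P.rk (T₁ ∪ C ∪ {e}) ≤ P.rk (T₁ ∪ C ∪ T₂ ∪ {e}) := by
      refine rk_mono hP ?_
      intro x hx
      rcases hx with h | h
      · exact Or.inl (Or.inl h)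
      · exact Or.inr h
    omega
  have e1 : P.closure T₁ = P.closure (T₁ ∪ T₂) :=
    closure_eq_closure_of_rk_le hP Set.subset_union_left
      (Set.union_subset hT₁ hT₂) (by omega)
  have e2 : P.closure T₂ = P.closure (T₁ ∪ T₂) :=
    closure_eq_closure_of_rk_le hP Set.subset_union_right
      (Set.union_subset hT₁ hT₂) (by omega)
  rw [e1, e2]


end Aux

/-- If `(M, 𝒮; e_1, …, e_h)` is an `(a,q,h,d)`-pyramid and `0 ≤ i ≤ j ≤ h`,
then `(M / {e_{i+1}, …, e_j}, 𝒮; e_1, …, e_i, e_{j+1}, …, e_h)` is an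
`(a, q, h-(j-i), d)`-pyramid. -/
theorem statement16 {α : Type*} (a q d : ℕ) (ha : 1 ≤ a) (hq : 1 ≤ q) (hd : 1 ≤ d)
    (M : Matroid α) (hM : M.Finite) (𝒮 : Finset (Set α)) (L : List α)
    (hP : M.IsPyramid 𝒮 L a q d) (i j : ℕ) (hij : i ≤ j) (hj : j ≤ L.length) :
    (M.contract' {x | x ∈ (L.take j).drop i}).IsPyramid 𝒮 (L.take i ++ L.drop j) a q d := by
  classical
  obtain ⟨hnd, hLind, hSne, hS4, hS5, hS6, hS7⟩ := hP
  have hij' : i ≤ L.length := le_trans hij hj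
  have hilen : (L.take i).length = i := by simp [List.length_take, min_eq_left hij']
  have hdecomp1 : L.take j = L.take i ++ (L.take j).drop i := by
    conv_lhs => rw [← List.take_append_drop i (L.take j)]
    rw [List.take_take, min_eq_left hij]
  have hdecomp : L = (L.take i ++ (L.take j).drop i) ++ L.drop j := by
    rw [← hdecomp1, List.take_append_drop]
  have hnd' := hnd
  rw [hdecomp, List.nodup_append, List.nodup_append] at hnd'
  obtain ⟨⟨hnda, hndb, hdab⟩, hndc, hdabc⟩ := hnd'
  have hmemL : ∀ x, x ∈ L ↔ (x ∈ L.take i ∨ x ∈ (L.take j).drop i ∨ x ∈ L.drop j) := by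
    intro x
    conv_lhs => rw [hdecomp]
    simp [List.mem_append, or_assoc]
  -- basic notation and facts
  have hLsub : {x | x ∈ L} ⊆ M.E := hLind.subset_ground
  have hCsubL : {x | x ∈ (L.take j).drop i} ⊆ {x | x ∈ L} := by
    intro x hx
    exact (hmemL x).mpr (Or.inr (Or.inl hx))
  have hCind : M.Indep {x | x ∈ (L.take j).drop i} := hLind.subset hCsubL
  have hCsubE : {x | x ∈ (L.take j).drop i} ⊆ M.E := hCsubL.trans hLsub
  have hSsub : ∀ T ∈ 𝒮, T ⊆ M.E := fun T hT => (hS4 T hT).1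
  have hSL : ∀ T ∈ 𝒮, Disjoint T {x | x ∈ L} := by
    intro T hT
    by_contra hcon
    obtain ⟨x, hxT, hxL⟩ := Set.not_disjoint_iff.mp hcon
    have h1 := rk_submod hM (hSsub T hT) hLsub
    rw [hS5 T hT] at h1
    have h2 : ({x} : Set α).ncard ≤ M.rk (T ∩ {x | x ∈ L}) :=
      rk_le_of_indep_subset hM (hLind.subset (Set.singleton_subset_iff.mpr hxL))
        (Set.singleton_subset_iff.mpr ⟨hxT, hxL⟩)
    rw [Set.ncard_singleton] at h2
    omega
  have hL'eq : {x | x ∈ L.take i ++ L.drop j} ∪ {x | x ∈ (L.take j).drop i} = {x | x ∈ L} := by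
    ext x
    simp only [Set.mem_union, Set.mem_setOf_eq, List.mem_append, hmemL x]
    tauto
  have hdisjL' : Disjoint {x | x ∈ L.take i ++ L.drop j} {x | x ∈ (L.take j).drop i} := by
    rw [Set.disjoint_left]
    intro x hx hxC
    simp only [Set.mem_setOf_eq, List.mem_append] at hx hxC
    rcases hx with h | h
    · exact hdab _ h _ hxC rfl
    · exact hdabc _ (List.mem_append.mpr (Or.inr hxC)) _ h rfl
  have hL'subL : {x | x ∈ L.take i ++ L.drop j} ⊆ {x | x ∈ L} :=
    (Set.subset_union_left).trans hL'eq.subset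
  have hL'NE : {x | x ∈ L.take i ++ L.drop j} ⊆ M.E \ {x | x ∈ (L.take j).drop i} :=
    Set.subset_diff.mpr ⟨hL'subL.trans hLsub, hdisjL'⟩
  have htakesubL : ∀ n, {x | x ∈ L.take n} ⊆ {x | x ∈ L} := fun n x hx =>
    List.take_subset n L hx
  have htakei : ∀ n, n ≤ i → {x | x ∈ L.take n} ⊆ {x | x ∈ L.take i} := by
    intro n hn x hx
    have heq : L.take n = (L.take i).take n := by rw [List.take_take, min_eq_left hn]
    rw [Set.mem_setOf_eq, heq] at hx
    exact List.take_subset n (L.take i) hx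
  have hCdisj_takei : ∀ n, n ≤ i → Disjoint {x | x ∈ (L.take j).drop i} {x | x ∈ L.take n} := by
    intro n hn
    rw [Set.disjoint_right]
    intro x hx hxC
    exact hdab _ (htakei n hn hx) _ hxC rfl
  have hNrk : ∀ T ∈ 𝒮, (M.contract' {x | x ∈ (L.take j).drop i}).rk T = a := by
    intro T hT
    have h := contract_rk_skew hM hLind (hSsub T hT) (hSL T hT) (hS5 T hT) hCsubL
      (Set.empty_subset _) (Set.disjoint_left.mpr (by simp))
    rw [Set.union_empty, Set.ncard_empty, (hS4 T hT).2] at h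
    simpa using h
  refine ⟨?_, ?_, hSne, ?_, ?_, ?_, ?_⟩
  · -- Nodup
    have hsub : (L.take i ++ L.drop j).Sublist L := by
      conv_rhs => rw [← List.take_append_drop i L]
      refine List.Sublist.append_left ?_ _
      have heq : L.drop j = (L.drop i).drop (j - i) := by
        rw [List.drop_drop]
        congr 1
        omega
      rw [heq]
      exact List.drop_sublist _ _
    exact hnd.sublist hsub
  · -- Indep
    rw [contract_indep_iff' hCind, hL'eq]
    exact ⟨hLind, hdisjL'⟩
  · -- members of 𝒮 : subset and rank
    intro T hT
    refine ⟨?_, hNrk T hT⟩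
    rw [contract_ground']
    exact Set.subset_diff.mpr ⟨hSsub T hT, Set.disjoint_of_subset_right hCsubL (hSL T hT)⟩
  · -- skewness
    intro T hT
    have hTNE : T ∪ {x | x ∈ L.take i ++ L.drop j} ⊆ M.E \ {x | x ∈ (L.take j).drop i} := by
      refine Set.union_subset ?_ hL'NE
      exact Set.subset_diff.mpr ⟨hSsub T hT, Set.disjoint_of_subset_right hCsubL (hSL T hT)⟩
    have h1 := contract_rk_add hM hCind hTNE
    have hset1 : (T ∪ {x | x ∈ L.take i ++ L.drop j}) ∪ {x | x ∈ (L.take j).drop i}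
        = T ∪ {x | x ∈ L} := by rw [Set.union_assoc, hL'eq]
    rw [hset1, hS5 T hT] at h1
    have h2 := contract_rk_add hM hCind hL'NE
    rw [hL'eq] at h2
    have h3 := hNrk T hT
    have h4 := (hS4 T hT).2
    omega
  · -- the pyramid exchange condition
    intro i' hi' T hT
    have hi'len : i' < i + (L.length - j) := by
      simpa [List.length_append, List.length_take, List.length_drop, min_eq_left hij'] using hi'
    by_cases hcase : i' < i
    · -- Case A : i' < i
      have hi'lt : i' < L.length := by omega
      obtain ⟨f, hf1, hf2, hf3⟩ := hS6 i' hi'lt T hT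
      have ht1 : (L.take i ++ L.drop j).take i' = L.take i' := by
        rw [List.take_append, hilen, List.take_take,
          min_eq_left (le_of_lt hcase), Nat.sub_eq_zero_of_le (le_of_lt hcase)]
        simp
      have ht2 : (L.take i ++ L.drop j).take (i' + 1) = L.take (i' + 1) := by
        rw [List.take_append, hilen, List.take_take,
          min_eq_left hcase, Nat.sub_eq_zero_of_le hcase]
        simp
      have hAsubL : {x | x ∈ L.take i'} ⊆ {x | x ∈ L} := htakesubL i'
      have hAind : M.Indep {x | x ∈ L.take i'} := hLind.subset hAsubL
      have hASind : M.Indep {x | x ∈ L.take (i' + 1)} := hLind.subset (htakesubL _)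
      have hCdisjA : Disjoint {x | x ∈ (L.take j).drop i} {x | x ∈ L.take i'} :=
        hCdisj_takei i' (le_of_lt hcase)
      have hCdisjAS : Disjoint {x | x ∈ (L.take j).drop i} {x | x ∈ L.take (i' + 1)} :=
        hCdisj_takei (i' + 1) hcase
      -- the element e
      have heL : L[i']'hi'lt ∈ L := List.getElem_mem _
      have heLset : L[i']'hi'lt ∈ {x | x ∈ L} := heL
      have heTakei : L[i']'hi'lt ∈ L.take i := by
        have hlen : i' < (L.take i).length := by rw [hilen]; exact hcase
        have heq : L[i']'hi'lt = (L.take i)[i']'hlen := by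
          rw [List.getElem_take]
        rw [heq]
        exact List.getElem_mem _
      have heTake : L[i']'hi'lt ∉ {x | x ∈ L.take i'} := by
        intro hmem
        have hnd2 := hnd
        rw [← List.take_append_drop i' L, List.nodup_append] at hnd2
        refine hnd2.2.2 _ hmem _ ?_ rfl
        rw [List.drop_eq_getElem_cons hi'lt]
        exact List.mem_cons_self
      have heC : L[i']'hi'lt ∉ {x | x ∈ (L.take j).drop i} := fun hmem => hdab _ heTakei _ hmem rfl
      have htake_succ : {x | x ∈ L.take (i' + 1)} = insert (L[i']'hi'lt) {x | x ∈ L.take i'} := by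
        ext x
        simp only [Set.mem_setOf_eq, List.take_succ, List.getElem?_eq_getElem hi'lt,
          Option.toList_some, List.mem_append, List.mem_singleton, Set.mem_insert_iff]
        tauto
      -- facts about P := M.contract' {x | x ∈ L.take i'}
      have hPfin : (M.contract' {x | x ∈ L.take i'}).Finite := contract'_finite hM _
      have hTP : ∀ T' ∈ 𝒮, T' ⊆ (M.contract' {x | x ∈ L.take i'}).E := by
        intro T' hT'
        rw [contract_ground']
        exact Set.subset_diff.mpr ⟨hSsub T' hT',
          Set.disjoint_of_subset_right hAsubL (hSL T' hT')⟩
      have hCP : {x | x ∈ (L.take j).drop i} ⊆ (M.contract' {x | x ∈ L.take i'}).E := by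
        rw [contract_ground']
        exact Set.subset_diff.mpr ⟨hCsubE, hCdisjA⟩
      have heP : L[i']'hi'lt ∈ (M.contract' {x | x ∈ L.take i'}).E := by
        rw [contract_ground']
        exact ⟨hLsub heLset, heTake⟩
      have hPCind : (M.contract' {x | x ∈ L.take i'}).Indep {x | x ∈ (L.take j).drop i} := by
        rw [contract_indep_iff' hAind]
        exact ⟨hLind.subset (Set.union_subset hCsubL hAsubL), hCdisjA⟩
      have hPeind : (M.contract' {x | x ∈ L.take i'}).Indep {L[i']'hi'lt} := by
        rw [contract_indep_iff' hAind]
        exact ⟨hLind.subset (Set.union_subset (Set.singleton_subset_iff.mpr heLset) hAsubL),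
          Set.disjoint_singleton_left.mpr heTake⟩
      have hrkP : ∀ T' ∈ 𝒮, ∀ Y : Set α, Y ⊆ {x | x ∈ L} → Disjoint Y {x | x ∈ L.take i'} →
          (M.contract' {x | x ∈ L.take i'}).rk (T' ∪ Y) = a + Y.ncard := by
        intro T' hT' Y hY hYA
        have h := contract_rk_skew hM hLind (hSsub T' hT') (hSL T' hT') (hS5 T' hT')
          hAsubL hY hYA
        rw [(hS4 T' hT').2] at h
        exact h
      have hQP : M.contract' {x | x ∈ L.take (i' + 1)}
          = (M.contract' {x | x ∈ L.take i'}).contract' {L[i']'hi'lt} := by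
        rw [contract_contract', htake_succ, Set.union_singleton]
      have hTPe : ∀ T' ∈ 𝒮, T' ⊆ (M.contract' {x | x ∈ L.take i'}).E \ {L[i']'hi'lt} := by
        intro T' hT'
        refine Set.subset_diff.mpr ⟨hTP T' hT', Set.disjoint_singleton_right.mpr ?_⟩
        exact fun hmem => Set.disjoint_right.mp (hSL T' hT') heLset hmem
      have hsime : ∀ t, (M.contract' {x | x ∈ L.take i'}).closure (f t ∪ {L[i']'hi'lt})
          = (M.contract' {x | x ∈ L.take i'}).closure (T ∪ {L[i']'hi'lt}) := by
        intro t
        have h := hf3 t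
        rw [hQP, contract_closure_eq' hPeind (hTPe _ (hf1 t)),
          contract_closure_eq' hPeind (hTPe _ hT)] at h
        have hsubcl : ∀ T' ∈ 𝒮, {L[i']'hi'lt} ⊆
            (M.contract' {x | x ∈ L.take i'}).closure (T' ∪ {L[i']'hi'lt}) := fun T' hT' =>
          (Set.subset_union_right).trans ((M.contract' {x | x ∈ L.take i'}).subset_closure _
            (Set.union_subset (hTP T' hT') (Set.singleton_subset_iff.mpr heP)))
        calc (M.contract' {x | x ∈ L.take i'}).closure (f t ∪ {L[i']'hi'lt})
            = ((M.contract' {x | x ∈ L.take i'}).closure (f t ∪ {L[i']'hi'lt})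
                \ {L[i']'hi'lt}) ∪ {L[i']'hi'lt} :=
              (Set.diff_union_of_subset (hsubcl _ (hf1 t))).symm
          _ = ((M.contract' {x | x ∈ L.take i'}).closure (T ∪ {L[i']'hi'lt})
                \ {L[i']'hi'lt}) ∪ {L[i']'hi'lt} := by rw [h]
          _ = (M.contract' {x | x ∈ L.take i'}).closure (T ∪ {L[i']'hi'lt}) :=
              Set.diff_union_of_subset (hsubcl T hT)
      refine ⟨f, hf1, ?_, ?_⟩
      · -- dissimilarity
        rw [ht1]
        have hmA : (M.contract' {x | x ∈ (L.take j).drop i}).contract' {x | x ∈ L.take i'}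
            = (M.contract' {x | x ∈ L.take i'}).contract' {x | x ∈ (L.take j).drop i} := by
          rw [contract_contract', contract_contract', Set.union_comm]
        rw [hmA]
        intro t s hts hcontra
        refine hf2 t s hts ?_
        have hXC : ∀ T' ∈ 𝒮, T' ⊆ (M.contract' {x | x ∈ L.take i'}).E
            \ {x | x ∈ (L.take j).drop i} := fun T' hT' =>
          Set.subset_diff.mpr ⟨hTP T' hT',
            Set.disjoint_of_subset_right hCsubL (hSL T' hT')⟩
        have hsubclC : ∀ T' ∈ 𝒮, {x | x ∈ (L.take j).drop i} ⊆
            (M.contract' {x | x ∈ L.take i'}).closure (T' ∪ {x | x ∈ (L.take j).drop i}) :=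
          fun T' hT' => (Set.subset_union_right).trans
            ((M.contract' {x | x ∈ L.take i'}).subset_closure _
              (Set.union_subset (hTP T' hT') hCP))
        have hCeqP : (M.contract' {x | x ∈ L.take i'}).closure (f t ∪ {x | x ∈ (L.take j).drop i})
            = (M.contract' {x | x ∈ L.take i'}).closure (f s ∪ {x | x ∈ (L.take j).drop i}) := by
          have hcl := hcontra
          rw [contract_closure_eq' hPCind (hXC _ (hf1 t)),
            contract_closure_eq' hPCind (hXC _ (hf1 s))] at hcl
          calc (M.contract' {x | x ∈ L.take i'}).closure (f t ∪ {x | x ∈ (L.take j).drop i})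
              = ((M.contract' {x | x ∈ L.take i'}).closure (f t ∪ {x | x ∈ (L.take j).drop i})
                  \ {x | x ∈ (L.take j).drop i}) ∪ {x | x ∈ (L.take j).drop i} :=
                (Set.diff_union_of_subset (hsubclC _ (hf1 t))).symm
            _ = ((M.contract' {x | x ∈ L.take i'}).closure (f s ∪ {x | x ∈ (L.take j).drop i})
                  \ {x | x ∈ (L.take j).drop i}) ∪ {x | x ∈ (L.take j).drop i} := by rw [hcl]
            _ = (M.contract' {x | x ∈ L.take i'}).closure
                  (f s ∪ {x | x ∈ (L.take j).drop i}) :=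
                Set.diff_union_of_subset (hsubclC _ (hf1 s))
        have hY1 : (M.contract' {x | x ∈ L.take i'}).rk (f t) = a := by
          have h := hrkP _ (hf1 t) ∅ (Set.empty_subset _) (Set.disjoint_left.mpr (by simp))
          simpa using h
        have hY2 : (M.contract' {x | x ∈ L.take i'}).rk (f s) = a := by
          have h := hrkP _ (hf1 s) ∅ (Set.empty_subset _) (Set.disjoint_left.mpr (by simp))
          simpa using h
        have hYe : (M.contract' {x | x ∈ L.take i'}).rk (f t ∪ {L[i']'hi'lt}) = a + 1 := by
          have h := hrkP _ (hf1 t) {L[i']'hi'lt} (Set.singleton_subset_iff.mpr heLset)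
            (Set.disjoint_singleton_left.mpr heTake)
          rwa [Set.ncard_singleton] at h
        have hYC1 : (M.contract' {x | x ∈ L.take i'}).rk (f t ∪ {x | x ∈ (L.take j).drop i})
            = a + ({x | x ∈ (L.take j).drop i} : Set α).ncard :=
          hrkP _ (hf1 t) _ hCsubL hCdisjA
        have hYC2 : (M.contract' {x | x ∈ L.take i'}).rk (f s ∪ {x | x ∈ (L.take j).drop i})
            = a + ({x | x ∈ (L.take j).drop i} : Set α).ncard :=
          hrkP _ (hf1 s) _ hCsubL hCdisjA
        have hYCe : (M.contract' {x | x ∈ L.take i'}).rk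
            (f t ∪ {x | x ∈ (L.take j).drop i} ∪ {L[i']'hi'lt})
            = a + ({x | x ∈ (L.take j).drop i} : Set α).ncard + 1 := by
          have h := hrkP _ (hf1 t) ({x | x ∈ (L.take j).drop i} ∪ {L[i']'hi'lt})
            (Set.union_subset hCsubL (Set.singleton_subset_iff.mpr heLset))
            (Set.disjoint_union_left.mpr ⟨hCdisjA, Set.disjoint_singleton_left.mpr heTake⟩)
          rw [← Set.union_assoc] at h
          rw [h, Set.union_singleton,
            Set.ncard_insert_of_notMem heC (M.set_finite _ hCsubE)]
          omega
        exact dissim_transfer hPfin (hTP _ (hf1 t)) (hTP _ (hf1 s)) hCP heP hY1 hY2 hYe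
          hYC1 hYCe (by rw [hsime t, hsime s]) hCeqP
      · -- similarity
        rw [ht2]
        have hmA' : (M.contract' {x | x ∈ (L.take j).drop i}).contract' {x | x ∈ L.take (i' + 1)}
            = (M.contract' {x | x ∈ L.take (i' + 1)}).contract' {x | x ∈ (L.take j).drop i} := by
          rw [contract_contract', contract_contract', Set.union_comm]
        rw [hmA']
        intro t
        have hQCind : (M.contract' {x | x ∈ L.take (i' + 1)}).Indep
            {x | x ∈ (L.take j).drop i} := by
          rw [contract_indep_iff' hASind]
          exact ⟨hLind.subset (Set.union_subset hCsubL (htakesubL _)), hCdisjAS⟩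
        have hXQ : ∀ T' ∈ 𝒮, T' ⊆ (M.contract' {x | x ∈ L.take (i' + 1)}).E
            \ {x | x ∈ (L.take j).drop i} := by
          intro T' hT'
          rw [contract_ground']
          refine Set.subset_diff.mpr ⟨Set.subset_diff.mpr ⟨hSsub T' hT', ?_⟩, ?_⟩
          · exact Set.disjoint_of_subset_right (htakesubL _) (hSL T' hT')
          · exact Set.disjoint_of_subset_right hCsubL (hSL T' hT')
        exact closure_congr_contract hQCind (hXQ _ (hf1 t)) (hXQ _ hT) (hf3 t)
    · -- Case B : i ≤ i'
      push_neg at hcase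
      have hi₀ : i' + (j - i) < L.length := by omega
      obtain ⟨f, hf1, hf2, hf3⟩ := hS6 (i' + (j - i)) hi₀ T hT
      have hsetA : ∀ n, i ≤ n → {x | x ∈ (L.take j).drop i}
          ∪ {x | x ∈ (L.take i ++ L.drop j).take n} = {x | x ∈ L.take (n + (j - i))} := by
        intro n hn
        have h1 : (L.take i ++ L.drop j).take n = L.take i ++ (L.drop j).take (n - i) := by
          rw [List.take_append, hilen, List.take_take, min_eq_right hn]
        have h2 : L.take (n + (j - i)) = (L.take i ++ (L.take j).drop i)
            ++ (L.drop j).take (n - i) := by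
          have hadd : n + (j - i) = j + (n - i) := by omega
          rw [hadd, List.take_add, ← hdecomp1]
        rw [h1, h2]
        ext x
        simp only [Set.mem_union, Set.mem_setOf_eq, List.mem_append]
        tauto
      refine ⟨f, hf1, ?_, ?_⟩
      · have hmeq : (M.contract' {x | x ∈ (L.take j).drop i}).contract'
            {x | x ∈ (L.take i ++ L.drop j).take i'}
            = M.contract' {x | x ∈ L.take (i' + (j - i))} := by
          rw [contract_contract', hsetA i' hcase]
        rw [hmeq]
        exact hf2
      · have hmeq' : (M.contract' {x | x ∈ (L.take j).drop i}).contract'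
            {x | x ∈ (L.take i ++ L.drop j).take (i' + 1)}
            = M.contract' {x | x ∈ L.take (i' + (j - i) + 1)} := by
          have hidx : i' + 1 + (j - i) = i' + (j - i) + 1 := by omega
          rw [contract_contract', hsetA (i' + 1) (by omega), hidx]
        rw [hmeq']
        exact hf3
  · -- thickness
    intro T hT
    show ((M.contract' {x | x ∈ (L.take j).drop i}) ↾ T).Thick d
    have hTNE : T ⊆ M.E \ {x | x ∈ (L.take j).drop i} :=
      Set.subset_diff.mpr ⟨hSsub T hT, Set.disjoint_of_subset_right hCsubL (hSL T hT)⟩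
    have hskTC : M.rk (T ∪ {x | x ∈ (L.take j).drop i})
        = M.rk T + M.rk {x | x ∈ (L.take j).drop i} :=
      rk_union_eq_of_skew_right hM (hSsub T hT) hLsub (hS5 T hT) hCsubL
    rw [contract_restrict_eq hM hCind hTNE hskTC]
    exact hS7 T hT


end Matroid
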